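/- Let X = OG(m, 2n+1) with 1 ≤ m < n, k = n-m, and let λ, μ be k-strict partitions in the m×(n+k) rectangle with |λ| + |μ| ≤ 2n - 1. Then the dual index set 𝒫^∨(λ), defined by p_j^∨ = 2n+2 - p_{m+1-j}(λ), satisfies p_j^∨ ≤ p_j(μ) for all 1 ≤ j ≤ m. -/

import Mathlib

/-- The index-set (Schubert symbol) map for the odd orthogonal Grassmannian
`OG(m, 2n+1)` with `k = n - m`:
`p_j(λ) = n+k+1 - λ_j + #{i < j : λ_i + λ_j ≤ 2k + j - i} + [λ_j ≤ k]`. -/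
def pIdx (n k : ℕ) (lam : ℕ → ℕ) (j : ℕ) : ℕ :=
  n + k + 1 - lam j + ((Finset.Ico 1 j).filter fun i => lam i + lam j ≤ 2 * k + j - i).card
    + (if lam j ≤ k then 1 else 0)

lemma chainAux (m k : ℕ) (nu : ℕ → ℕ)
    (hdec : ∀ i j, 1 ≤ i → i ≤ j → j ≤ m → nu j ≤ nu i)
    (hstrict : ∀ j, 1 ≤ j → j < m → k < nu j → nu (j + 1) < nu j) :
    ∀ d i, 1 ≤ i → i + d ≤ m → k < nu (i + d) → nu (i + d) + d ≤ nu i := by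
  intro d
  induction d with
  | zero => intro i _ _ _; simp
  | succ d ih =>
    intro i hi hm hk
    have hk' : k < nu (i + d + 1) := hk
    have hd1 : nu (i + d + 1) ≤ nu (i + d) :=
      hdec (i + d) (i + d + 1) (by omega) (by omega) (by omega)
    have hkd : k < nu (i + d) := by omega
    have hs := hstrict (i + d) (by omega) (by omega) hkd
    have hih := ih i hi (by omega) hkd
    show nu (i + d + 1) + (d + 1) ≤ nu i
    omega

lemma sum_lb (m j c : ℕ) (f : ℕ → ℕ) (hj : j ≤ m)
    (h : ∀ i, 1 ≤ i → i ≤ j → c ≤ f i) :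
    j * c ≤ ∑ i ∈ Finset.Icc 1 m, f i := by
  calc j * c = ∑ _i ∈ Finset.Icc 1 j, c := by
        rw [Finset.sum_const, smul_eq_mul, Nat.card_Icc]; rw [Nat.add_sub_cancel, Nat.mul_comm]
    _ ≤ ∑ i ∈ Finset.Icc 1 j, f i := by
        apply Finset.sum_le_sum
        intro i hi
        rw [Finset.mem_Icc] at hi
        exact h i hi.1 hi.2
    _ ≤ ∑ i ∈ Finset.Icc 1 m, f i := by
        apply Finset.sum_le_sum_of_subset
        exact Finset.Icc_subset_Icc_right hj

lemma keyLemma (n m k : ℕ) (hm : 1 ≤ m) (hmn : m < n) (hk : k = n - m)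
    (nu rho : ℕ → ℕ)
    (hnutop : nu 1 ≤ n + k)
    (hnudec : ∀ i j, 1 ≤ i → i ≤ j → j ≤ m → nu j ≤ nu i)
    (hrhodec : ∀ i j, 1 ≤ i → i ≤ j → j ≤ m → rho j ≤ rho i)
    (hrhostrict : ∀ j, 1 ≤ j → j < m → k < rho j → rho (j + 1) < rho j)
    (hsum : (∑ i ∈ Finset.Icc 1 m, nu i) + (∑ i ∈ Finset.Icc 1 m, rho i) ≤ 2 * n - 1)
    (j j' : ℕ) (hj : 1 ≤ j) (hjm : j ≤ m) (hj' : j' = m + 1 - j)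
    (hbig : k < nu j) (hsmall : rho j' ≤ k) :
    nu j + rho j' ≤ 2 * k + 1 +
      ((Finset.Ico 1 j').filter fun i => rho i + rho j' ≤ 2 * k + j' - i).card := by
  have hnk : n = m + k := by omega
  have hk1 : 1 ≤ k := by omega
  have hj'1 : 1 ≤ j' := by omega
  have hj'm : j' ≤ m := by omega
  set S := (Finset.Ico 1 j').filter (fun i => rho i + rho j' ≤ 2 * k + j' - i) with hS_def
  set C := S.card with hC_def
  set a := nu j with ha_def
  set b := rho j' with hb_def
  by_contra hcon
  have h : 2 * k + 2 + C ≤ a + b := by omega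
  have hA : a ≤ n + k := le_trans (hnudec 1 j le_rfl hj hjm) hnutop
  -- degree-sum lower bound from nu
  have hSnu : j * a ≤ ∑ i ∈ Finset.Icc 1 m, nu i := by
    apply sum_lb m j a nu hjm
    intro i hi1 hij
    exact hnudec i j hi1 hij hjm
  -- C ≤ j' - 1
  have hCle : C ≤ j' - 1 := by
    have h1 : S.card ≤ (Finset.Ico 1 j').card := Finset.card_le_card (Finset.filter_subset _ _)
    rw [Nat.card_Ico] at h1
    omega
  -- upper segment is in S
  have hupper : Finset.Ico (j' - C) j' ⊆ S := by
    intro i0 hi0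
    rw [Finset.mem_Ico] at hi0
    by_contra hi0S
    have hi0m : 1 ≤ i0 := by omega
    have hnc : ¬ (rho i0 + rho j' ≤ 2 * k + j' - i0) := by
      intro hc
      exact hi0S (Finset.mem_filter.mpr ⟨Finset.mem_Ico.mpr ⟨hi0m, hi0.2⟩, hc⟩)
    have hbig0 : k < rho i0 := by omega
    have hsub : S ⊆ Finset.Ico (i0 + 1) j' := by
      intro s hs
      rw [hS_def, Finset.mem_filter, Finset.mem_Ico] at hs
      rw [Finset.mem_Ico]
      refine ⟨?_, hs.1.2⟩
      by_contra hsle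
      have hsi0 : s ≤ i0 := by omega
      obtain ⟨d, rfl⟩ : ∃ d, i0 = s + d := ⟨i0 - s, by omega⟩
      have hch := chainAux m k rho hrhodec hrhostrict d s hs.1.1 (by omega) hbig0
      have hcount := hs.2
      omega
    have hcard := Finset.card_le_card hsub
    rw [Nat.card_Ico] at hcard
    omega
  have hScard : (Finset.Ico (j' - C) j').card = C := by
    rw [Nat.card_Ico]; omega
  have hSeq : Finset.Ico (j' - C) j' = S :=
    Finset.eq_of_subset_of_card_le hupper (by rw [hScard])
  set P := j' - 1 - C with hP_def
  have hPC : P + 1 + C = j' := by omega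
  -- cap: from a ≤ n + k = m + 2k
  obtain ⟨w, hw⟩ : ∃ w, k = b + w := ⟨k - b, by omega⟩
  -- rho sum lower bound
  have hSrho : P * (b + 2 * w + C + 2) + (C + 1) * b ≤ ∑ i ∈ Finset.Icc 1 m, rho i := by
    have hsplit : (∑ i ∈ Finset.Ioc 0 P, rho i) + ∑ i ∈ Finset.Ioc P j', rho i
        = ∑ i ∈ Finset.Ioc 0 j', rho i :=
      Finset.sum_Ioc_consecutive rho (Nat.zero_le P) (by omega)
    have hb1 : P * (b + 2 * w + C + 2) ≤ ∑ i ∈ Finset.Ioc 0 P, rho i := by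
      have : ∀ i ∈ Finset.Ioc 0 P, b + 2 * w + C + 2 ≤ rho i := by
        intro i hi
        rw [Finset.mem_Ioc] at hi
        have hiS : i ∉ S := by
          rw [← hSeq, Finset.mem_Ico]; omega
        have hnc : ¬ (rho i + rho j' ≤ 2 * k + j' - i) := by
          intro hc
          exact hiS (Finset.mem_filter.mpr ⟨Finset.mem_Ico.mpr ⟨by omega, by omega⟩, hc⟩)
        omega
      calc P * (b + 2 * w + C + 2) = (Finset.Ioc 0 P).card * (b + 2 * w + C + 2) := by
            rw [Nat.card_Ioc]; simp
        _ ≤ ∑ i ∈ Finset.Ioc 0 P, rho i := by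
            rw [← smul_eq_mul]
            exact Finset.card_nsmul_le_sum _ _ _ this
    have hb2 : (C + 1) * b ≤ ∑ i ∈ Finset.Ioc P j', rho i := by
      have : ∀ i ∈ Finset.Ioc P j', b ≤ rho i := by
        intro i hi
        rw [Finset.mem_Ioc] at hi
        exact hrhodec i j' (by omega) hi.2 hj'm
      calc (C + 1) * b = (Finset.Ioc P j').card * b := by rw [Nat.card_Ioc]; congr 1; omega
        _ ≤ ∑ i ∈ Finset.Ioc P j', rho i := by
            rw [← smul_eq_mul]
            exact Finset.card_nsmul_le_sum _ _ _ this
    have hIoc : ∑ i ∈ Finset.Ioc 0 j', rho i ≤ ∑ i ∈ Finset.Icc 1 m, rho i := by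
      apply Finset.sum_le_sum_of_subset
      intro x hx
      rw [Finset.mem_Ioc] at hx
      rw [Finset.mem_Icc]
      omega
    omega
  -- now the arithmetic contradiction
  have ha' : b + 2 * w + 2 + C ≤ a := by omega
  have h1 : j * (b + 2 * w + C + 2) ≤ j * a := Nat.mul_le_mul_left j (by omega)
  have hq2 : 2 ≤ j + P + b := by omega
  have hmsum : j + P + C = m := by omega
  have hsum' : (∑ i ∈ Finset.Icc 1 m, nu i) + (∑ i ∈ Finset.Icc 1 m, rho i) + 1
      ≤ 2 * m + 2 * (b + w) := by omega
  have hfin : (j + P) * (b + 2 * w + C + 2) + (C + 1) * b + 1 ≤ 2 * m + 2 * (b + w) := by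
    have := Nat.add_mul j P (b + 2 * w + C + 2)
    omega
  have e3 : C * 2 ≤ C * (j + P + b) := Nat.mul_le_mul_left C hq2
  have hx : (j + P) * (b + 2 * w + C + 2)
      = (j + P) * b + (j + P) * (2 * w) + (j + P) * C + (j + P) * 2 := by ring
  have hy : C * (j + P + b) = C * (j + P) + C * b := by ring
  have hz : (j + P) * C = C * (j + P) := Nat.mul_comm _ _
  have hw2 : (C + 1) * b = C * b + b := by ring
  have e1 : 1 * b ≤ (j + P) * b := Nat.mul_le_mul_right b (by omega)
  have e2 : 1 * (2 * w) ≤ (j + P) * (2 * w) := Nat.mul_le_mul_right (2 * w) (by omega)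
  have hm' : m = j + P + C := by omega
  rw [hm'] at hfin
  linarith [hfin, e1, e2, e3, hx, hy, hz, hw2]


/-- Let `X = OG(m, 2n+1)` with `1 ≤ m < n`, `k = n - m`, and let `λ, μ` be `k`-strict
partitions in the `m × (n+k)` rectangle with `|λ| + |μ| ≤ 2n - 1`.  Then the dual index
set, `p_j^∨ = 2n + 2 - p_{m+1-j}(λ)`, satisfies `p_j^∨ ≤ p_j(μ)` for all `1 ≤ j ≤ m`. -/
theorem stmt_18 (n m k : ℕ) (hm : 1 ≤ m) (hmn : m < n) (hk : k = n - m)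
    (lam mu : ℕ → ℕ)
    (hlamtop : lam 1 ≤ n + k) (hmutop : mu 1 ≤ n + k)
    (hlamdec : ∀ i j, 1 ≤ i → i ≤ j → j ≤ m → lam j ≤ lam i)
    (hmudec : ∀ i j, 1 ≤ i → i ≤ j → j ≤ m → mu j ≤ mu i)
    (hlamstrict : ∀ j, 1 ≤ j → j < m → k < lam j → lam (j + 1) < lam j)
    (hmustrict : ∀ j, 1 ≤ j → j < m → k < mu j → mu (j + 1) < mu j)
    (hsum : (∑ i ∈ Finset.Icc 1 m, lam i) + (∑ i ∈ Finset.Icc 1 m, mu i) ≤ 2 * n - 1) :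
    ∀ j, 1 ≤ j → j ≤ m → 2 * n + 2 ≤ pIdx n k mu j + pIdx n k lam (m + 1 - j) := by
  intro j hj hjm
  have hk1 : 1 ≤ k := by omega
  set j2 := m + 1 - j with hj2
  have hj21 : 1 ≤ j2 := by omega
  have hj2m : j2 ≤ m := by omega
  have hamu : mu j ≤ n + k := le_trans (hmudec 1 j le_rfl hj hjm) hmutop
  have hblam : lam j2 ≤ n + k := le_trans (hlamdec 1 j2 le_rfl hj21 hj2m) hlamtop
  simp only [pIdx]
  by_cases h1 : mu j ≤ k <;> by_cases h2 : lam j2 ≤ k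
  · -- both small
    rw [if_pos h1, if_pos h2]
    omega
  · -- mu small, lam big
    rw [if_pos h1, if_neg h2]
    have hkey := keyLemma n m k hm hmn hk lam mu hlamtop hlamdec hmudec hmustrict
      (by omega) j2 j hj21 hj2m (by omega) (by omega) h1
    omega
  · -- mu big, lam small
    rw [if_neg h1, if_pos h2]
    have hsum' : (∑ i ∈ Finset.Icc 1 m, mu i) + (∑ i ∈ Finset.Icc 1 m, lam i) ≤ 2 * n - 1 := by
      omega
    have hkey := keyLemma n m k hm hmn hk mu lam hmutop hmudec hlamdec hlamstrict
      hsum' j j2 hj hjm (by omega) (by omega) h2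
    omega
  · -- both big
    exfalso
    have hS1 : j * (k + 1) ≤ ∑ i ∈ Finset.Icc 1 m, mu i := by
      apply sum_lb m j (k + 1) mu hjm
      intro i hi1 hij
      have := hmudec i j hi1 hij hjm
      omega
    have hS2 : j2 * (k + 1) ≤ ∑ i ∈ Finset.Icc 1 m, lam i := by
      apply sum_lb m j2 (k + 1) lam hj2m
      intro i hi1 hij
      have := hlamdec i j2 hi1 hij hj2m
      omega
    have hjj2 : j + j2 = m + 1 := by omega
    have hmul : j * (k + 1) + j2 * (k + 1) = (m + 1) * (k + 1) := by
      rw [← Nat.add_mul, hjj2]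
    obtain ⟨m2, rfl⟩ : ∃ m2, m = m2 + 1 := ⟨m - 1, by omega⟩
    obtain ⟨k2, rfl⟩ : ∃ k2, k = k2 + 1 := ⟨k - 1, by omega⟩
    have hexp : (m2 + 1 + 1) * (k2 + 1 + 1) = m2 * k2 + 2 * m2 + 2 * k2 + 4 := by ring
    have hge : 2 * (m2 + 1) + 2 * (k2 + 1) ≤ (m2 + 1 + 1) * (k2 + 1 + 1) := by
      rw [hexp]; omega
    omega
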